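/- Let V = ℂ^{2n} (n ≥ 2) with standard symplectic basis e₁,…,eₙ,e₋₁,…,e₋ₙ and 𝔥 = 𝔰𝔭(2n,ℂ) acting on Λ²ℂ^{2n}. Let φ = Σ_{i=2}^{n} e₁∧eᵢ ⊗ (E_{1,i} − E_{n+i,n+1}) ∈ (Λ²V) ⊗ 𝔥. Then with x = e₋₁∧e₋₂, y = e₂∧e₃, z = e₋₁∧e₋₃, the cyclic sum ⟨φ(x)y, z⟩ + ⟨φ(y)z, x⟩ + ⟨φ(z)x, y⟩ equals 2 (in particular is nonzero), where ⟨·,·⟩ is the symmetric form induced on Λ²ℂ^{2n} and φ(ξ) for ξ ∈ Λ²V denotes contraction of φ against ξ producing an element of 𝔥 acting on Λ²V. -/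

import Mathlib

/-- `V = ℂ^{2n}` with basis `e₁,…,eₙ,e₋₁,…,e₋ₙ`: `Sum.inl i ↔ e_{i+1}`,
`Sum.inr i ↔ e_{-(i+1)}`. -/
abbrev Vc (n : ℕ) := (Fin n ⊕ Fin n) → ℂ

/-- standard basis vectors -/
noncomputable def ee {n : ℕ} (i : Fin n ⊕ Fin n) : Vc n := Pi.single i 1

/-- the standard symplectic form with `ω(eᵢ, e₋ᵢ) = 1` -/
noncomputable def ωc (n : ℕ) (u v : Vc n) : ℂ :=
  ∑ i : Fin n, (u (Sum.inl i) * v (Sum.inr i) - u (Sum.inr i) * v (Sum.inl i))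

/-- the induced symmetric bilinear form on `Λ²ℂ^{2n}`:
`⟨u∧v, w∧z⟩ = ω(u,w)ω(v,z) − ω(u,z)ω(v,w)` -/
noncomputable def Fc (n : ℕ) (u v w z : Vc n) : ℂ :=
  ωc n u w * ωc n v z - ωc n u z * ωc n v w

/-- the elementary matrix `E_{a,b}` as an endomorphism of `ℂ^{2n}` -/
noncomputable def Ec {n : ℕ} (a b : Fin n ⊕ Fin n) : Vc n → Vc n :=
  fun u => u b • ee a

/-- The element `φ = Σ_{i=2}^{n} e₁∧eᵢ ⊗ (E_{1,i} − E_{n+i,n+1})` of `Λ²V ⊗ 𝔥`,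
viewed (via contraction with the induced form on `Λ²V`) as the map sending
`u∧v ∈ Λ²V` to the endomorphism `Σ_{i≠1} ⟨e₁∧eᵢ, u∧v⟩ (E_{1,i} − E_{n+i,n+1})`. -/
noncomputable def φc (n : ℕ) [NeZero n] (u v : Vc n) : Vc n → Vc n :=
  fun w =>
    ∑ i ∈ Finset.univ.filter (fun i : Fin n => i ≠ 0),
      Fc n (ee (Sum.inl 0)) (ee (Sum.inl i)) u v •
        (Ec (Sum.inl 0) (Sum.inl i) w - Ec (Sum.inr i) (Sum.inr 0) w)

/-- `⟨A·(u∧v), w∧z⟩` where `A` acts on `Λ²V` by the derivation action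
`A·(u∧v) = Au∧v + u∧Av`. -/
noncomputable def Gc (n : ℕ) (A : Vc n → Vc n) (u v w z : Vc n) : ℂ :=
  Fc n (A u) v w z + Fc n u (A v) w z


lemma om_ll {n : ℕ} (i j : Fin n) : ωc n (ee (Sum.inl i)) (ee (Sum.inl j)) = 0 := by
  simp [ωc, ee, Pi.single_apply]

lemma om_rr {n : ℕ} (i j : Fin n) : ωc n (ee (Sum.inr i)) (ee (Sum.inr j)) = 0 := by
  simp [ωc, ee, Pi.single_apply]

lemma om_lr {n : ℕ} (i j : Fin n) :
    ωc n (ee (Sum.inl i)) (ee (Sum.inr j)) = if i = j then 1 else 0 := by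
  simp [ωc, ee, Pi.single_apply, ite_and, Finset.sum_ite_eq, eq_comm]

lemma om_rl {n : ℕ} (i j : Fin n) :
    ωc n (ee (Sum.inr i)) (ee (Sum.inl j)) = if i = j then -1 else 0 := by
  simp [ωc, ee, Pi.single_apply, ite_and, Finset.sum_ite_eq, eq_comm]
  split <;> simp

lemma om_zero_left {n : ℕ} (v : Vc n) : ωc n 0 v = 0 := by simp [ωc]
lemma om_zero_right {n : ℕ} (u : Vc n) : ωc n u 0 = 0 := by simp [ωc]
lemma om_neg_left {n : ℕ} (u v : Vc n) : ωc n (-u) v = -ωc n u v := by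
  simp only [ωc, ← Finset.sum_neg_distrib]
  exact Finset.sum_congr rfl fun i _ => by simp; ring

lemma phi_rr (m : ℕ) (k : Fin (m + 3)) (hk : k ≠ 0) :
    φc (m + 3) (ee (Sum.inr 0)) (ee (Sum.inr k)) =
      fun w => Ec (Sum.inl 0) (Sum.inl k) w - Ec (Sum.inr k) (Sum.inr 0) w := by
  funext w
  unfold φc
  rw [Finset.sum_eq_single k]
  · simp [Fc, om_lr, hk]
  · intro i _ hik
    simp [Fc, om_lr, hik, hk.symm]
  · intro h
    simp [hk] at h

lemma phi_ll (m : ℕ) (j k : Fin (m + 3)) :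
    φc (m + 3) (ee (Sum.inl j)) (ee (Sum.inl k)) = fun _ => 0 := by
  funext w
  unfold φc
  apply Finset.sum_eq_zero
  intro i _
  simp [Fc, om_ll]

lemma fin_one_ne (m : ℕ) : (1 : Fin (m + 3)) ≠ 0 := by
  simp [Fin.ext_iff]

lemma fin_two_ne (m : ℕ) : (2 : Fin (m + 3)) ≠ 0 := by
  simp [Fin.ext_iff, Nat.mod_eq_of_lt (show 2 < m + 3 by omega)]

lemma fin_one_ne_two (m : ℕ) : (1 : Fin (m + 3)) ≠ 2 := by
  simp [Fin.ext_iff, Nat.mod_eq_of_lt (show 2 < m + 3 by omega)]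

lemma v1 (m : ℕ) :
    φc (m + 3) (ee (Sum.inr 0)) (ee (Sum.inr 1)) (ee (Sum.inl 1)) = ee (Sum.inl 0) := by
  rw [phi_rr m 1 (fin_one_ne m)]
  simp [Ec, ee, Pi.single_apply]

lemma v2 (m : ℕ) :
    φc (m + 3) (ee (Sum.inr 0)) (ee (Sum.inr 1)) (ee (Sum.inl 2)) = 0 := by
  rw [phi_rr m 1 (fin_one_ne m)]
  simp [Ec, ee, Pi.single_apply, fin_one_ne_two m]

lemma v3 (m : ℕ) :
    φc (m + 3) (ee (Sum.inr 0)) (ee (Sum.inr 2)) (ee (Sum.inr 0)) = -ee (Sum.inr 2) := by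
  rw [phi_rr m 2 (fin_two_ne m)]
  simp [Ec, ee, Pi.single_apply, fin_two_ne m]

lemma v4 (m : ℕ) :
    φc (m + 3) (ee (Sum.inr 0)) (ee (Sum.inr 2)) (ee (Sum.inr 1)) = 0 := by
  rw [phi_rr m 2 (fin_two_ne m)]
  simp [Ec, ee, Pi.single_apply, (fin_one_ne_two m).symm, fin_one_ne m]

/-- For `𝔥 = 𝔰𝔭(2n,ℂ)` acting on `Λ²ℂ^{2n}` (`n ≥ 3`, here `n = m+3`),
the highest weight vector `φ = Σ_{i=2}^n e₁∧eᵢ ⊗ (E_{1,i} − E_{n+i,n+1})` has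
nonvanishing cyclic sum: with `x = e₋₁∧e₋₂`, `y = e₂∧e₃`, `z = e₋₁∧e₋₃`,
`⟨φ(x)y, z⟩ + ⟨φ(y)z, x⟩ + ⟨φ(z)x, y⟩ = 2`. -/
theorem highest_vector_not_in_P (m : ℕ) :
    Gc (m + 3) (φc (m + 3) (ee (Sum.inr 0)) (ee (Sum.inr 1)))
        (ee (Sum.inl 1)) (ee (Sum.inl 2)) (ee (Sum.inr 0)) (ee (Sum.inr 2))
      + Gc (m + 3) (φc (m + 3) (ee (Sum.inl 1)) (ee (Sum.inl 2)))
        (ee (Sum.inr 0)) (ee (Sum.inr 2)) (ee (Sum.inr 0)) (ee (Sum.inr 1))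
      + Gc (m + 3) (φc (m + 3) (ee (Sum.inr 0)) (ee (Sum.inr 2)))
        (ee (Sum.inr 0)) (ee (Sum.inr 1)) (ee (Sum.inl 1)) (ee (Sum.inl 2)) = 2 := by
  rw [phi_ll]
  unfold Gc
  rw [v1, v2, v3, v4]
  simp [Fc, om_ll, om_rr, om_lr, om_rl, om_zero_left, om_zero_right, om_neg_left,
    fin_one_ne_two m, (fin_one_ne m).symm, (fin_two_ne m).symm, Fin.ext_iff]
  norm_num
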